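/- Let (z_j)_{j=1}^∞ be a sequence in 𝔻∖{0} with r₀ := inf_j |z_j| > 0 and Z := ∑_{j=1}^∞ (1 − |z_j|) < ∞. For each integer n ≥ 1 the sum B_n = (1/n)∑_{j=1}^∞ (z_j^{−n} − (conj z_j)ⁿ) converges absolutely and satisfies |B_n| ≤ (2/r₀ⁿ)·Z. Moreover the Blaschke product B(z) = ∏_{j=1}^∞ (|z_j|/z_j)·(z_j − z)/(1 − (conj z_j)·z) converges for every z ∈ 𝔻, and for every z with |z| < r₀ one has B(z) = (∏_{j=1}^∞ |z_j|) · exp(−∑_{n=1}^∞ B_n zⁿ), the latter series converging absolutely for |z| < r₀. -/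

import Mathlib

set_option maxHeartbeats 1000000

/-- The coefficient `B_n = (1/n)∑_{j=1}^∞ (z_j^{-n} - (conj z_j)ⁿ)`. -/
noncomputable def blaschkeCoef (z : ℕ → ℂ) (n : ℕ) : ℂ :=
  (1 / (n : ℂ)) * ∑' j : ℕ, ((z j) ^ (-(n : ℤ)) - (starRingEnd ℂ) (z j) ^ n)

/-- The `j`-th factor `(|z_j|/z_j)·(z_j - w)/(1 - conj(z_j)·w)` of the Blaschke product. -/
noncomputable def blaschkeTerm (z : ℕ → ℂ) (w : ℂ) (j : ℕ) : ℂ :=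
  ((‖z j‖ : ℂ) / z j) * ((z j - w) / (1 - (starRingEnd ℂ) (z j) * w))

open Complex Filter

lemma aux_bound {a : ℂ} (ha0 : a ≠ 0) (ha1 : ‖a‖ < 1) {r₀ : ℝ} (hr₀ : 0 < r₀) (hle : r₀ ≤ ‖a‖)
    (n : ℕ) :
    ‖a ^ (-(n:ℤ)) - (starRingEnd ℂ) a ^ n‖ ≤ (2 * n / r₀ ^ n) * (1 - ‖a‖) := by
  have hr : 0 < ‖a‖ := lt_of_lt_of_le hr₀ hle
  have hconj : a * (starRingEnd ℂ) a = ((‖a‖^2 : ℝ) : ℂ) := by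
    rw [Complex.mul_conj]
    norm_cast
    rw [Complex.normSq_eq_norm_sq]
  have hpn : (a ^ n) ≠ 0 := pow_ne_zero _ ha0
  have h1 : a ^ (-(n:ℤ)) - (starRingEnd ℂ) a ^ n
      = (a ^ n)⁻¹ * (1 - ((‖a‖^2 : ℝ) : ℂ) ^ n) := by
    rw [zpow_neg, zpow_natCast, ← hconj, mul_pow]
    field_simp
  rw [h1, norm_mul, norm_inv, norm_pow]
  have h2 : ‖(1 - ((‖a‖^2 : ℝ) : ℂ) ^ n)‖ = 1 - (‖a‖^2)^n := by
    have h2' : (1 - ((‖a‖^2 : ℝ) : ℂ) ^ n) = (((1 - (‖a‖^2)^n : ℝ)) : ℂ) := by push_cast; ring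
    have hp1 : (‖a‖^2)^n ≤ 1 := pow_le_one₀ (by positivity) (by nlinarith)
    rw [h2', Complex.norm_real, Real.norm_eq_abs, _root_.abs_of_nonneg (by linarith)]
  rw [h2]
  have hber : (1:ℝ) + n * (‖a‖^2 - 1) ≤ (‖a‖^2)^n := by
    have := one_add_mul_le_pow (a := ‖a‖^2 - 1) (by nlinarith) n
    simpa using this
  have hp1 : (‖a‖^2)^n ≤ 1 := pow_le_one₀ (by positivity) (by nlinarith)
  have h3 : 1 - (‖a‖^2)^n ≤ 2 * n * (1 - ‖a‖) := by
    nlinarith [mul_nonneg (mul_nonneg (Nat.cast_nonneg (α := ℝ) n)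
      (by linarith : (0:ℝ) ≤ 1 - ‖a‖)) (by linarith : (0:ℝ) ≤ 1 - ‖a‖)]
  have h4 : (‖a‖ ^ n)⁻¹ ≤ (r₀ ^ n)⁻¹ := by
    apply inv_anti₀ (by positivity)
    exact pow_le_pow_left₀ (le_of_lt hr₀) hle n
  calc (‖a‖ ^ n)⁻¹ * (1 - (‖a‖^2)^n) ≤ (r₀ ^ n)⁻¹ * (2 * n * (1 - ‖a‖)) := by
        apply mul_le_mul h4 h3 (by linarith) (by positivity)
    _ = (2 * n / r₀ ^ n) * (1 - ‖a‖) := by ring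

lemma aux_denom_ne {a w : ℂ} (ha1 : ‖a‖ < 1) (hw : ‖w‖ < 1) :
    1 - (starRingEnd ℂ) a * w ≠ 0 := by
  intro h
  have h1 : (starRingEnd ℂ) a * w = 1 := by linear_combination -h
  have h2 : ‖(starRingEnd ℂ) a * w‖ < 1 := by
    rw [norm_mul, RCLike.norm_conj]
    nlinarith [norm_nonneg a, norm_nonneg w]
  rw [h1, norm_one] at h2
  exact lt_irrefl _ h2

lemma aux_term_sub_one {a w : ℂ} (ha0 : a ≠ 0) (ha1 : ‖a‖ < 1) (hw : ‖w‖ < 1) :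
    ((‖a‖ : ℂ) / a) * ((a - w) / (1 - (starRingEnd ℂ) a * w)) - 1
      = ((‖a‖ : ℂ) - 1) * (a + (‖a‖ : ℂ) * w) / (a * (1 - (starRingEnd ℂ) a * w)) := by
  have hd := aux_denom_ne ha1 hw
  have hconj : (starRingEnd ℂ) a * a = ((‖a‖ : ℂ))^2 := by
    rw [mul_comm, Complex.mul_conj]
    norm_cast
    rw [Complex.normSq_eq_norm_sq]
  have hd' : 1 - w * (starRingEnd ℂ) a ≠ 0 := by rwa [mul_comm]
  field_simp
  linear_combination w * hconj

lemma aux_term_sub_one_norm {a w : ℂ} (ha0 : a ≠ 0) (ha1 : ‖a‖ < 1) (hw : ‖w‖ < 1)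
    {r₀ : ℝ} (hr₀ : 0 < r₀) (hle : r₀ ≤ ‖a‖) :
    ‖((‖a‖ : ℂ) / a) * ((a - w) / (1 - (starRingEnd ℂ) a * w)) - 1‖
      ≤ (2 / (r₀ * (1 - ‖w‖))) * (1 - ‖a‖) := by
  have hd := aux_denom_ne ha1 hw
  have hdpos : 0 < ‖1 - (starRingEnd ℂ) a * w‖ := norm_pos_iff.2 hd
  have hapos : 0 < ‖a‖ := norm_pos_iff.2 ha0
  rw [aux_term_sub_one ha0 ha1 hw]
  rw [norm_div, norm_mul, norm_mul]
  have h1 : ‖(‖a‖ : ℂ) - 1‖ = 1 - ‖a‖ := by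
    rw [show ((‖a‖ : ℂ) - 1) = (((‖a‖ - 1 : ℝ)) : ℂ) by push_cast; ring, Complex.norm_real,
      Real.norm_eq_abs, abs_sub_comm, _root_.abs_of_nonneg (by linarith)]
  have h2 : ‖a + (‖a‖ : ℂ) * w‖ ≤ 2 := by
    calc ‖a + (‖a‖ : ℂ) * w‖ ≤ ‖a‖ + ‖(‖a‖ : ℂ) * w‖ := norm_add_le _ _
      _ ≤ 2 := by
        rw [norm_mul, Complex.norm_real, Real.norm_eq_abs, _root_.abs_of_nonneg (norm_nonneg a)]
        nlinarith [norm_nonneg a, norm_nonneg w, hw]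
  have h3 : r₀ * (1 - ‖w‖) ≤ ‖a‖ * ‖1 - (starRingEnd ℂ) a * w‖ := by
    have h4 : 1 - ‖w‖ ≤ ‖1 - (starRingEnd ℂ) a * w‖ := by
      calc 1 - ‖w‖ ≤ 1 - ‖(starRingEnd ℂ) a * w‖ := by
            rw [norm_mul, RCLike.norm_conj]
            nlinarith [norm_nonneg w, norm_nonneg a]
        _ ≤ ‖1 - (starRingEnd ℂ) a * w‖ := by
            calc 1 - ‖(starRingEnd ℂ) a * w‖ ≤ ‖(1 : ℂ)‖ - ‖(starRingEnd ℂ) a * w‖ := by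
                  rw [norm_one]
              _ ≤ ‖1 - (starRingEnd ℂ) a * w‖ := norm_sub_norm_le _ _
    calc r₀ * (1 - ‖w‖) ≤ ‖a‖ * (1 - ‖w‖) := by nlinarith
      _ ≤ ‖a‖ * ‖1 - (starRingEnd ℂ) a * w‖ := mul_le_mul_of_nonneg_left h4 (norm_nonneg a)
  have hDpos : (0:ℝ) < r₀ * (1 - ‖w‖) := by nlinarith
  rw [div_le_iff₀ (by positivity : (0:ℝ) < ‖a‖ * ‖1 - (starRingEnd ℂ) a * w‖)]
  calc ‖(‖a‖:ℂ) - 1‖ * ‖a + (‖a‖:ℂ) * w‖ ≤ (1 - ‖a‖) * 2 := by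
        rw [h1]; exact mul_le_mul_of_nonneg_left h2 (by linarith)
    _ = 2 / (r₀ * (1 - ‖w‖)) * (1 - ‖a‖) * (r₀ * (1 - ‖w‖)) := by
        rw [div_mul_eq_mul_div, div_mul_cancel₀ _ hDpos.ne']
        ring
    _ ≤ 2 / (r₀ * (1 - ‖w‖)) * (1 - ‖a‖) * (‖a‖ * ‖1 - (starRingEnd ℂ) a * w‖) :=
        mul_le_mul_of_nonneg_left h3 (mul_nonneg (by positivity) (by linarith))

/-- Part 1 packaged. -/
lemma aux_part1 (z : ℕ → ℂ) (hz1 : ∀ j, ‖z j‖ < 1) (hz0 : ∀ j, z j ≠ 0)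
    {r₀ : ℝ} (hr₀pos : 0 < r₀) (hle : ∀ j, r₀ ≤ ‖z j‖)
    (hsum : Summable (fun j => 1 - ‖z j‖)) (n : ℕ) (hn : 1 ≤ n) :
    Summable (fun j => ‖(z j) ^ (-(n : ℤ)) - (starRingEnd ℂ) (z j) ^ n‖) ∧
    ‖blaschkeCoef z n‖ ≤ (2 / r₀ ^ n) * ∑' j : ℕ, (1 - ‖z j‖) := by
  have hb : ∀ j, ‖(z j) ^ (-(n : ℤ)) - (starRingEnd ℂ) (z j) ^ n‖
      ≤ (2 * n / r₀ ^ n) * (1 - ‖z j‖) :=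
    fun j => aux_bound (hz0 j) (hz1 j) hr₀pos (hle j) n
  have hs1 : Summable (fun j => ‖(z j) ^ (-(n : ℤ)) - (starRingEnd ℂ) (z j) ^ n‖) :=
    Summable.of_nonneg_of_le (fun j => norm_nonneg _) hb (hsum.mul_left _)
  refine ⟨hs1, ?_⟩
  have hnpos : (0:ℝ) < n := by exact_mod_cast hn
  rw [blaschkeCoef, norm_mul]
  have h5 : ‖(1/(n:ℂ))‖ = 1/(n:ℝ) := by
    simp [norm_div]
  rw [h5]
  calc (1/(n:ℝ)) * ‖∑' j : ℕ, ((z j) ^ (-(n : ℤ)) - (starRingEnd ℂ) (z j) ^ n)‖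
      ≤ (1/(n:ℝ)) * ∑' j : ℕ, ‖(z j) ^ (-(n : ℤ)) - (starRingEnd ℂ) (z j) ^ n‖ :=
        mul_le_mul_of_nonneg_left (norm_tsum_le_tsum_norm hs1) (by positivity)
    _ ≤ (1/(n:ℝ)) * ((2 * n / r₀ ^ n) * ∑' j : ℕ, (1 - ‖z j‖)) := by
        apply mul_le_mul_of_nonneg_left _ (by positivity)
        rw [← tsum_mul_left]
        exact Summable.tsum_le_tsum hb hs1 (hsum.mul_left _)
    _ = (2 / r₀ ^ n) * ∑' j : ℕ, (1 - ‖z j‖) := by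
        field_simp

/-- Part 2 packaged. -/
lemma aux_part2 (z : ℕ → ℂ) (hz1 : ∀ j, ‖z j‖ < 1) (hz0 : ∀ j, z j ≠ 0)
    {r₀ : ℝ} (hr₀pos : 0 < r₀) (hle : ∀ j, r₀ ≤ ‖z j‖)
    (hsum : Summable (fun j => 1 - ‖z j‖)) (w : ℂ) (hw : ‖w‖ < 1) :
    Multipliable (blaschkeTerm z w) := by
  by_cases hzero : ∃ j, blaschkeTerm z w j = 0
  · obtain ⟨j₀, hj₀⟩ := hzero
    refine ⟨0, ?_⟩
    have hev : ∀ᶠ s : Finset ℕ in atTop, ∏ i ∈ s, blaschkeTerm z w i = 0 := by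
      filter_upwards [eventually_ge_atTop ({j₀} : Finset ℕ)] with s hs
      exact Finset.prod_eq_zero (hs (Finset.mem_singleton_self j₀)) hj₀
    exact Tendsto.congr' (EventuallyEq.symm hev) tendsto_const_nhds
  · push_neg at hzero
    have hbound : ∀ j, ‖blaschkeTerm z w j - 1‖ ≤ (2/(r₀*(1-‖w‖))) * (1 - ‖z j‖) :=
      fun j => aux_term_sub_one_norm (hz0 j) (hz1 j) hw hr₀pos (hle j)
    have htend : Tendsto (fun j => (2/(r₀*(1-‖w‖))) * (1 - ‖z j‖)) cofinite (nhds 0) := by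
      have h1 := hsum.tendsto_cofinite_zero.const_mul (2/(r₀*(1-‖w‖)))
      simpa using h1
    have hev : ∀ᶠ j in cofinite, ‖blaschkeTerm z w j - 1‖ ≤ 1/2 := by
      filter_upwards [htend.eventually (gt_mem_nhds (show (0:ℝ) < 1/2 by norm_num))] with j hj
      exact le_trans (hbound j) (le_of_lt hj)
    have hlog : Summable (fun j => Complex.log (blaschkeTerm z w j)) := by
      apply Summable.of_norm_bounded_eventually
        (g := fun j => (3/2) * ((2/(r₀*(1-‖w‖))) * (1 - ‖z j‖))) ((hsum.mul_left _).mul_left _)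
      filter_upwards [hev] with j hj
      calc ‖Complex.log (blaschkeTerm z w j)‖
          = ‖Complex.log (1 + (blaschkeTerm z w j - 1))‖ := by ring_nf
        _ ≤ 3/2 * ‖blaschkeTerm z w j - 1‖ := Complex.norm_log_one_add_half_le_self hj
        _ ≤ (3/2) * ((2/(r₀*(1-‖w‖))) * (1 - ‖z j‖)) :=
            mul_le_mul_of_nonneg_left (hbound j) (by norm_num)
    have hprod := hlog.hasSum.cexp
    have heq : (cexp ∘ fun j => Complex.log (blaschkeTerm z w j)) = blaschkeTerm z w :=
      funext fun j => Complex.exp_log (hzero j)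
    rw [heq] at hprod
    exact ⟨_, hprod⟩

lemma aux_shift {u : ℂ} (hu : ‖u‖ < 1) :
    HasSum (fun n : ℕ => u^(n+1)/(((n+1:ℕ)):ℂ)) (-(Complex.log (1-u))) := by
  have h := Complex.hasSum_taylorSeries_neg_log hu
  have h' : HasSum (fun n : ℕ => u^n/(n:ℂ))
      (-(Complex.log (1-u)) + ∑ i ∈ Finset.range 1, u^i/(i:ℂ)) := by
    simpa using h
  exact (hasSum_nat_add_iff 1).2 h' 

noncomputable def auxC (z : ℕ → ℂ) (w : ℂ) (j n : ℕ) : ℂ :=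
  ((1/(((n+1:ℕ)):ℂ)) * w^(n+1)) * ((z j) ^ (-((n+1:ℕ):ℤ)) - (starRingEnd ℂ) (z j) ^ (n+1))

lemma auxC_eq {z : ℕ → ℂ} {w : ℂ} (j n : ℕ) (hz0 : z j ≠ 0) :
    (w / z j)^(n+1)/(((n+1:ℕ)):ℂ) - ((starRingEnd ℂ) (z j) * w)^(n+1)/(((n+1:ℕ)):ℂ)
      = auxC z w j n := by
  rw [auxC]
  have hzn : (z j)^(n+1) ≠ 0 := pow_ne_zero _ hz0
  have hnne : (((n+1:ℕ)):ℂ) ≠ 0 := Nat.cast_ne_zero.2 (Nat.succ_ne_zero n)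
  rw [zpow_neg, zpow_natCast, div_pow, mul_pow]
  ring

lemma auxC_norm_le (z : ℕ → ℂ) (hz1 : ∀ j, ‖z j‖ < 1) (hz0 : ∀ j, z j ≠ 0)
    {r₀ : ℝ} (hr₀pos : 0 < r₀) (hle : ∀ j, r₀ ≤ ‖z j‖) (w : ℂ) (j n : ℕ) :
    ‖auxC z w j n‖ ≤ (2 * (1 - ‖z j‖)) * (‖w‖ / r₀)^(n+1) := by
  rw [auxC, norm_mul, norm_mul, norm_pow]
  have hb := aux_bound (hz0 j) (hz1 j) hr₀pos (hle j) (n+1)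
  have hnn : ‖(1/(((n+1:ℕ)):ℂ))‖ = 1/((n+1:ℕ):ℝ) := by
    rw [norm_div, norm_one, Complex.norm_natCast]
  rw [hnn]
  calc 1/((n+1:ℕ):ℝ) * ‖w‖^(n+1) * ‖(z j) ^ (-((n+1:ℕ):ℤ)) - (starRingEnd ℂ) (z j) ^ (n+1)‖
      ≤ 1/((n+1:ℕ):ℝ) * ‖w‖^(n+1) * ((2 * (n+1:ℕ) / r₀ ^ (n+1)) * (1 - ‖z j‖)) :=
        mul_le_mul_of_nonneg_left hb (by positivity)
    _ = (2 * (1 - ‖z j‖)) * (‖w‖ / r₀)^(n+1) := by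
        rw [div_pow]
        have hne : ((n+1:ℕ):ℝ) ≠ 0 := by positivity
        field_simp

lemma auxC_hasSum (z : ℕ → ℂ) (hz1 : ∀ j, ‖z j‖ < 1) (hz0 : ∀ j, z j ≠ 0)
    {r₀ : ℝ} (hr₀pos : 0 < r₀) (hle : ∀ j, r₀ ≤ ‖z j‖) (w : ℂ) (hw : ‖w‖ < r₀)
    (hw1 : ‖w‖ < 1) (j : ℕ) :
    HasSum (fun n => auxC z w j n)
      (-(Complex.log (1 - w / z j)) + Complex.log (1 - (starRingEnd ℂ) (z j) * w)) := by
  have hzpos : 0 < ‖z j‖ := norm_pos_iff.2 (hz0 j)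
  have hwz : ‖w / z j‖ < 1 := by
    rw [norm_div, div_lt_one hzpos]; exact lt_of_lt_of_le hw (hle j)
  have hzw : ‖(starRingEnd ℂ) (z j) * w‖ < 1 := by
    rw [norm_mul, RCLike.norm_conj]
    nlinarith [norm_nonneg w, hz1 j, norm_nonneg (z j)]
  have h3 := (aux_shift hwz).sub (aux_shift hzw)
  have heq : (fun n : ℕ => (w / z j)^(n+1)/(((n+1:ℕ)):ℂ)
      - ((starRingEnd ℂ) (z j) * w)^(n+1)/(((n+1:ℕ)):ℂ)) = fun n => auxC z w j n :=
    funext fun n => auxC_eq j n (hz0 j)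
  rw [heq] at h3
  convert h3 using 1
  · rfl
  ring

/-- Part 3 packaged. -/
lemma aux_part3 (z : ℕ → ℂ) (hz1 : ∀ j, ‖z j‖ < 1) (hz0 : ∀ j, z j ≠ 0)
    {r₀ : ℝ} (hr₀pos : 0 < r₀) (hle : ∀ j, r₀ ≤ ‖z j‖)
    (hsum : Summable (fun j => 1 - ‖z j‖)) (w : ℂ) (hw : ‖w‖ < r₀) :
    Summable (fun n : ℕ => ‖blaschkeCoef z (n + 1) * w ^ (n + 1)‖) ∧
    (∏' j : ℕ, blaschkeTerm z w j)
      = (∏' j : ℕ, (‖z j‖ : ℂ)) *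
          Complex.exp (-(∑' n : ℕ, blaschkeCoef z (n + 1) * w ^ (n + 1))) := by
  have hw1 : ‖w‖ < 1 := lt_trans (lt_of_lt_of_le hw (hle 0)) (hz1 0)
  have hq0 : 0 ≤ ‖w‖ / r₀ := by positivity
  have hq1 : ‖w‖ / r₀ < 1 := by rw [div_lt_one hr₀pos]; exact hw
  have hgeo : Summable (fun n : ℕ => (‖w‖ / r₀)^(n+1)) := by
    simpa [pow_succ] using (summable_geometric_of_lt_one hq0 hq1).mul_right (‖w‖ / r₀)
  have hZ0 : 0 ≤ ∑' j : ℕ, (1 - ‖z j‖) :=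
    tsum_nonneg (fun j => by linarith [hz1 j])
  have hconj1 : Summable (fun n : ℕ => ‖blaschkeCoef z (n + 1) * w ^ (n + 1)‖) := by
    refine Summable.of_nonneg_of_le (fun n => norm_nonneg _)
      (f := fun n : ℕ => (2 * ∑' j : ℕ, (1 - ‖z j‖)) * (‖w‖ / r₀)^(n+1))
      (fun n => ?_) (hgeo.mul_left _)
    rw [norm_mul, norm_pow]
    have h1 := (aux_part1 z hz1 hz0 hr₀pos hle hsum (n+1) (Nat.le_add_left 1 n)).2
    calc ‖blaschkeCoef z (n+1)‖ * ‖w‖^(n+1)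
        ≤ ((2 / r₀ ^ (n+1)) * ∑' j : ℕ, (1 - ‖z j‖)) * ‖w‖^(n+1) :=
          mul_le_mul_of_nonneg_right h1 (by positivity)
      _ = (2 * ∑' j : ℕ, (1 - ‖z j‖)) * (‖w‖ / r₀)^(n+1) := by
          rw [div_pow]
          field_simp
  refine ⟨hconj1, ?_⟩
  have hF : Summable (Function.uncurry (auxC z w)) := by
    apply Summable.of_norm
    exact Summable.of_nonneg_of_le (fun p => norm_nonneg _)
      (fun p => auxC_norm_le z hz1 hz0 hr₀pos hle w p.1 p.2)
      ((hsum.mul_left 2).mul_of_nonneg hgeo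
        (fun j => by simp only [Pi.zero_apply]; linarith [hz1 j])
        (fun n => by simp only [Pi.zero_apply]; positivity))
  have hcj := auxC_hasSum z hz1 hz0 hr₀pos hle w hw hw1
  have hterm : ∀ j, blaschkeTerm z w j = (‖z j‖ : ℂ) * Complex.exp (-(∑' n, auxC z w j n)) := by
    intro j
    have hzpos : 0 < ‖z j‖ := norm_pos_iff.2 (hz0 j)
    have hwz : ‖w / z j‖ < 1 := by
      rw [norm_div, div_lt_one hzpos]; exact lt_of_lt_of_le hw (hle j)
    have h1ne : 1 - w / z j ≠ 0 := by
      refine sub_ne_zero.mpr (Ne.symm ?_)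
      intro h
      rw [h, norm_one] at hwz
      exact lt_irrefl _ hwz
    have h2ne : 1 - (starRingEnd ℂ) (z j) * w ≠ 0 := aux_denom_ne (hz1 j) hw1
    rw [(hcj j).tsum_eq, neg_add, neg_neg, Complex.exp_add, Complex.exp_log h1ne,
      Complex.exp_neg, Complex.exp_log h2ne]
    rw [blaschkeTerm, show (1 : ℂ) - w / z j = (z j - w) / z j by
      rw [eq_div_iff (hz0 j), sub_mul, one_mul, div_mul_cancel₀ _ (hz0 j)]]
    ring
  have hLsum : Summable (fun j => ∑' n, auxC z w j n) := hF.prod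
  have hfub : ∑' j, ∑' n, auxC z w j n = ∑' n : ℕ, blaschkeCoef z (n+1) * w^(n+1) := by
    rw [← Summable.tsum_comm hF]
    apply tsum_congr
    intro n
    have : (fun j => auxC z w j n)
        = fun j => ((1/(((n+1:ℕ)):ℂ)) * w^(n+1))
            * ((z j) ^ (-((n+1:ℕ):ℤ)) - (starRingEnd ℂ) (z j) ^ (n+1)) :=
      funext fun j => rfl
    rw [this, tsum_mul_left, blaschkeCoef]
    push_cast
    ring
  have hlogsum : Summable (fun j => Real.log ‖z j‖) := by
    apply Summable.of_norm_bounded (g := fun j => (1/r₀) * (1 - ‖z j‖)) (hsum.mul_left _)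
    intro j
    have hzpos : 0 < ‖z j‖ := norm_pos_iff.2 (hz0 j)
    have hlog_np : Real.log ‖z j‖ ≤ 0 := Real.log_nonpos (le_of_lt hzpos) (le_of_lt (hz1 j))
    rw [Real.norm_eq_abs, abs_of_nonpos hlog_np, ← Real.log_inv]
    have h5 := Real.log_le_sub_one_of_pos (inv_pos.2 hzpos)
    have h6 : (‖z j‖)⁻¹ - 1 ≤ (1/r₀) * (1 - ‖z j‖) := by
      calc (‖z j‖)⁻¹ - 1 = (1 - ‖z j‖)/‖z j‖ := by
            rw [eq_div_iff hzpos.ne', sub_mul, inv_mul_cancel₀ hzpos.ne']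
            ring
        _ ≤ (1 - ‖z j‖)/r₀ :=
            div_le_div_of_nonneg_left (by linarith [hz1 j]) hr₀pos (hle j)
        _ = (1/r₀) * (1 - ‖z j‖) := by ring
    linarith
  have hrprod : HasProd (fun j => ‖z j‖) (Real.exp (∑' j, Real.log ‖z j‖)) := by
    have h := hlogsum.hasSum.rexp
    have heq : (Real.exp ∘ fun j => Real.log ‖z j‖) = fun j => ‖z j‖ :=
      funext fun j => Real.exp_log (norm_pos_iff.2 (hz0 j))
    rwa [heq] at h
  have hrprodC : HasProd (fun j => ((‖z j‖ : ℝ) : ℂ))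
      (((Real.exp (∑' j, Real.log ‖z j‖) : ℝ)) : ℂ) := by
    have h := hrprod.map Complex.ofRealHom Complex.continuous_ofReal
    simpa [Function.comp_def] using h
  have hexp : HasProd (fun j => Complex.exp (-(∑' n, auxC z w j n)))
      (Complex.exp (-(∑' j, ∑' n, auxC z w j n))) := by
    have h := (hLsum.hasSum.neg).cexp
    simpa [Function.comp_def] using h
  have hfinal : HasProd (blaschkeTerm z w)
      ((((Real.exp (∑' j, Real.log ‖z j‖) : ℝ)) : ℂ)
        * Complex.exp (-(∑' j, ∑' n, auxC z w j n))) := by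
    have h := hrprodC.mul hexp
    have heq : (fun j => ((‖z j‖ : ℝ) : ℂ) * Complex.exp (-(∑' n, auxC z w j n)))
        = blaschkeTerm z w :=
      funext fun j => (hterm j).symm
    rwa [heq] at h
  rw [hfinal.tprod_eq, hrprodC.tprod_eq, hfub]

/-- For a sequence `(z_j)` in `𝔻 \ {0}` with `r₀ = inf |z_j| > 0` and
`Z = ∑ (1 - |z_j|) < ∞`: each `B_n` converges absolutely with `|B_n| ≤ (2/r₀ⁿ)Z`; the
Blaschke product converges on `𝔻`; and for `|w| < r₀`,
`B(w) = (∏ |z_j|)·exp(-∑_{n≥1} B_n wⁿ)` with the series converging absolutely. -/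
theorem statement12 (z : ℕ → ℂ) (hz1 : ∀ j, ‖z j‖ < 1) (hz0 : ∀ j, z j ≠ 0)
    (r₀ : ℝ) (hr₀ : r₀ = ⨅ j, ‖z j‖) (hr₀pos : 0 < r₀)
    (hsum : Summable (fun j => 1 - ‖z j‖)) :
    (∀ n : ℕ, 1 ≤ n →
      Summable (fun j => ‖(z j) ^ (-(n : ℤ)) - (starRingEnd ℂ) (z j) ^ n‖) ∧
      ‖blaschkeCoef z n‖ ≤ (2 / r₀ ^ n) * ∑' j : ℕ, (1 - ‖z j‖)) ∧
    (∀ w : ℂ, ‖w‖ < 1 → Multipliable (blaschkeTerm z w)) ∧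
    (∀ w : ℂ, ‖w‖ < r₀ →
      Summable (fun n : ℕ => ‖blaschkeCoef z (n + 1) * w ^ (n + 1)‖) ∧
      (∏' j : ℕ, blaschkeTerm z w j)
        = (∏' j : ℕ, (‖z j‖ : ℂ)) *
            Complex.exp (-(∑' n : ℕ, blaschkeCoef z (n + 1) * w ^ (n + 1)))) := by
  have hle : ∀ j, r₀ ≤ ‖z j‖ := by
    intro j
    rw [hr₀]
    exact ciInf_le ⟨0, by rintro x ⟨i, rfl⟩; exact norm_nonneg _⟩ j
  exact ⟨fun n hn => aux_part1 z hz1 hz0 hr₀pos hle hsum n hn,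
    fun w hw => aux_part2 z hz1 hz0 hr₀pos hle hsum w hw,
    fun w hw => aux_part3 z hz1 hz0 hr₀pos hle hsum w hw⟩
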